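/- Let G be an r-graph with spanning tree T and let e = uv be an edge of G not in T. Let G' be obtained from G − e by adding two new vertices u', v' joined to each other by r−1 parallel edges, together with edges uu' and vv'. Then G' is an r-graph, and T together with the edges uu', vv' is a spanning tree of G'. -/

import Mathlib

open Finset

structure Multigraph (V : Type) where
  mult : Sym2 V → ℕ
  loopless : ∀ v : V, mult s(v, v) = 0

namespace Multigraph

variable {V : Type} [Fintype V] [DecidableEq V]

def degree (G : Multigraph V) (v : V) : ℕ := ∑ u, G.mult s(v, u)

def IsRegular (G : Multigraph V) (r : ℕ) : Prop := ∀ v, G.degree v = r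

def cutsize (G : Multigraph V) (S : Finset V) : ℕ :=
  ∑ x ∈ S, ∑ y ∈ Sᶜ, G.mult s(x, y)

def IsRGraph (G : Multigraph V) (r : ℕ) : Prop :=
  G.IsRegular r ∧ ∀ S : Finset V, Odd S.card → r ≤ G.cutsize S

def reduce (G : Multigraph V) (S : Finset V) {u v : V} (huv : u ≠ v) :
    Multigraph {x : V // x ∉ S} where
  mult p := G.mult (p.map Subtype.val) + (if p.map Subtype.val = s(u, v) then 1 else 0)
  loopless a := by
    simp only [Sym2.map_pair_eq, G.loopless]
    rw [if_neg (fun h => by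
      rcases Sym2.eq_iff.mp h with ⟨rfl, rfl⟩ | ⟨rfl, rfl⟩ <;> exact huv rfl)]

def IsPerfectMatching (G : Multigraph V) (M : Sym2 V → ℕ) : Prop :=
  (∀ p, M p ≤ G.mult p) ∧ ∀ v, ∑ u, M s(v, u) = 1

def degIn (T : Sym2 V → ℕ) (v : V) : ℕ := ∑ u, T s(v, u)

def IsSpanningTree (G : Multigraph V) (T : Sym2 V → ℕ) : Prop :=
  (∀ p, T p ≤ G.mult p) ∧ (∑ p : Sym2 V, T p) + 1 = Fintype.card V ∧
    ∀ u v : V, Relation.ReflTransGen (fun a b => T s(a, b) ≠ 0) u v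

end Multigraph

open Multigraph

variable {V : Type} [Fintype V] [DecidableEq V]

/-- The edge-expansion of `G` at an edge `uv`: delete one edge `uv`, add two new
vertices `u' = Sum.inr 0` and `v' = Sum.inr 1` joined to each other by `r - 1`
parallel edges, together with the edges `uu'` and `vv'`. -/
def Multigraph.expand (G : Multigraph V) (r : ℕ) (u v : V) :
    Multigraph (V ⊕ Fin 2) where
  mult := Sym2.lift ⟨fun a b =>
    match a, b with
    | Sum.inl a, Sum.inl b => G.mult s(a, b) - (if s(a, b) = s(u, v) then 1 else 0)
    | Sum.inl a, Sum.inr i => if (i = 0 ∧ a = u) ∨ (i = 1 ∧ a = v) then 1 else 0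
    | Sum.inr i, Sum.inl a => if (i = 0 ∧ a = u) ∨ (i = 1 ∧ a = v) then 1 else 0
    | Sum.inr i, Sum.inr j => if i = j then 0 else r - 1,
    by
      intro a b
      rcases a with a | i <;> rcases b with b | j <;> simp only []
      · rw [Sym2.eq_swap]
      · simp [eq_comm]⟩
  loopless w := by
    rcases w with a | i <;> simp [G.loopless]

/-- The extension of the spanning tree `T` by the two new edges `uu'` and `vv'`
of the edge-expansion. -/
def treeExpand (T : Sym2 V → ℕ) (u v : V) : Sym2 (V ⊕ Fin 2) → ℕ :=
  Sym2.lift ⟨fun a b =>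
    match a, b with
    | Sum.inl a, Sum.inl b => T s(a, b)
    | Sum.inl a, Sum.inr i => if (i = 0 ∧ a = u) ∨ (i = 1 ∧ a = v) then 1 else 0
    | Sum.inr i, Sum.inl a => if (i = 0 ∧ a = u) ∨ (i = 1 ∧ a = v) then 1 else 0
    | Sum.inr _, Sum.inr _ => 0,
    by
      intro a b
      rcases a with a | i <;> rcases b with b | j <;> simp only []
      rw [Sym2.eq_swap]⟩


section Prelim
set_option linter.unusedSectionVars false
-- handshake lemma over a finset
lemma double_sum_eq_two_mul {W : Type} [Fintype W] [DecidableEq W]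
    (f : Sym2 W → ℕ) (hf : ∀ w, f s(w,w) = 0) (A : Finset W) :
    ∑ x ∈ A, ∑ y ∈ A, f s(x,y) = 2 * ∑ p ∈ A.sym2, f p := by
  have h1 : ∑ x ∈ A, ∑ y ∈ A, f s(x,y) = ∑ z ∈ A ×ˢ A, f s(z.1, z.2) := by
    rw [Finset.sum_product]
  rw [h1, Finset.sum_comp]
  have himg : (A ×ˢ A).image (fun z => s(z.1, z.2)) = A.sym2 := by
    ext p
    induction p using Sym2.ind with
    | _ a b =>
      simp only [mem_image, mem_product, Finset.mk_mem_sym2_iff, Prod.exists]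
      constructor
      · rintro ⟨x, y, ⟨hx, hy⟩, h⟩
        rw [Sym2.eq_iff] at h
        rcases h with ⟨rfl, rfl⟩ | ⟨rfl, rfl⟩
        exacts [⟨hx, hy⟩, ⟨hy, hx⟩]
      · rintro ⟨ha, hb⟩
        exact ⟨a, b, ⟨ha, hb⟩, rfl⟩
  rw [himg, Finset.mul_sum]
  refine Finset.sum_congr rfl ?_
  intro p hp
  induction p using Sym2.ind with
  | _ a b =>
    rw [Finset.mk_mem_sym2_iff] at hp
    by_cases hab : a = b
    · subst hab; simp [hf]
    · have : {z ∈ A ×ˢ A | s(z.1, z.2) = s(a,b)} = ({(a,b), (b,a)} : Finset (W × W)) := by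
        ext ⟨x, y⟩
        simp only [mem_filter, mem_product, mem_insert, mem_singleton, Prod.mk.injEq, Sym2.eq_iff]
        constructor
        · rintro ⟨-, ⟨rfl, rfl⟩ | ⟨rfl, rfl⟩⟩ <;> simp
        · rintro (⟨rfl, rfl⟩ | ⟨rfl, rfl⟩) <;> simp [hp.1, hp.2]
      rw [this, Finset.card_insert_of_notMem (by simp [Prod.ext_iff]; rintro rfl; exact fun h => hab h.symm),
        Finset.card_singleton, smul_eq_mul]


-- sum over Finset (Fin 2)
lemma sum_fin2 (B : Finset (Fin 2)) (f : Fin 2 → ℕ) :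
    ∑ i ∈ B, f i = (if 0 ∈ B then f 0 else 0) + (if 1 ∈ B then f 1 else 0) := by
  rw [← Fintype.sum_ite_mem B f, Fin.sum_univ_two]

lemma card_fin2 (B : Finset (Fin 2)) :
    B.card = (if 0 ∈ B then 1 else 0) + (if 1 ∈ B then 1 else 0) := by
  rw [Finset.card_eq_sum_ones, sum_fin2]

-- splitting sums over finsets of a sum type
lemma sum_sumtype {α β γ : Type*} [AddCommMonoid γ] [DecidableEq α] [DecidableEq β]
    (S : Finset (α ⊕ β)) (f : α ⊕ β → γ) :
    ∑ x ∈ S, f x = ∑ a ∈ S.toLeft, f (Sum.inl a) + ∑ b ∈ S.toRight, f (Sum.inr b) := by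
  rw [← Finset.sum_disjSum, Finset.toLeft_disjSum_toRight]

lemma compl_toLeft {α β : Type*} [Fintype α] [Fintype β] [DecidableEq α] [DecidableEq β]
    (S : Finset (α ⊕ β)) : Sᶜ.toLeft = S.toLeftᶜ := by
  ext a; simp
lemma compl_toRight {α β : Type*} [Fintype α] [Fintype β] [DecidableEq α] [DecidableEq β]
    (S : Finset (α ⊕ β)) : Sᶜ.toRight = S.toRightᶜ := by
  ext a; simp

-- indicator sums
lemma sum_ind {α : Type*} [Fintype α] [DecidableEq α] (A : Finset α) (u : α) :
    ∑ a ∈ A, (if a = u then 1 else 0) = (if u ∈ A then 1 else 0) :=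
  Finset.sum_ite_eq' A u (fun _ => 1)

-- connectivity: cut of a proper nonempty set is positive
lemma cutsize_pos {V : Type} [Fintype V] [DecidableEq V]
    (G : Multigraph V) (T : Sym2 V → ℕ) (hT : G.IsSpanningTree T)
    (S : Finset V) (hne : S.Nonempty) (hproper : S ≠ univ) :
    1 ≤ G.cutsize S := by
  by_contra h
  push_neg at h
  interval_cases hc : G.cutsize S
  have hzero : ∀ a ∈ S, ∀ b ∈ Sᶜ, G.mult s(a, b) = 0 := by
    intro a ha b hb
    have := (Finset.sum_eq_zero_iff.mp hc) a ha
    exact (Finset.sum_eq_zero_iff.mp this) b hb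
  obtain ⟨x, hx⟩ := hne
  obtain ⟨y, hy⟩ : Sᶜ.Nonempty := by
    rw [← Finset.card_pos, Finset.card_compl]
    have : S.card < Fintype.card V := by
      rw [← Finset.card_univ]
      exact Finset.card_lt_card (lt_of_le_of_ne (Finset.subset_univ S) hproper)
    omega
  have hreach : ∀ {a b : V}, Relation.ReflTransGen (fun a b => T s(a, b) ≠ 0) a b →
      a ∈ S → b ∈ S := by
    intro a b hab ha
    induction hab with
    | refl => exact ha
    | tail _ hbc ih =>
      rename_i b' c' _
      by_contra hc'
      have : G.mult s(b', c') = 0 := hzero b' ih c' (Finset.mem_compl.mpr hc')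
      exact hbc (Nat.eq_zero_of_le_zero (this ▸ hT.1 s(b', c')))
  exact (Finset.mem_compl.mp hy) (hreach (hT.2.2 x y) hx)


lemma cutsize_parity {V : Type} [Fintype V] [DecidableEq V]
    (G : Multigraph V) (r : ℕ) (hreg : G.IsRegular r) (A : Finset V) :
    ∃ k, r * A.card = 2 * k + G.cutsize A := by
  refine ⟨∑ p ∈ A.sym2, G.mult p, ?_⟩
  have h1 : ∑ x ∈ A, G.degree x = r * A.card := by
    rw [Finset.sum_congr rfl (fun x _ => hreg x), Finset.sum_const, smul_eq_mul, mul_comm]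
  rw [← h1]
  unfold Multigraph.degree Multigraph.cutsize
  rw [← double_sum_eq_two_mul G.mult G.loopless A, ← Finset.sum_add_distrib]
  refine Finset.sum_congr rfl ?_
  intro x _
  rw [Finset.sum_add_sum_compl]

end Prelim

section Helpers
set_option linter.unusedSectionVars false
variable {V : Type} [Fintype V] [DecidableEq V]

@[simp] lemma expand_mult_inl_inl (G : Multigraph V) (r : ℕ) (u v a b : V) :
    (G.expand r u v).mult s(Sum.inl a, Sum.inl b)
      = G.mult s(a, b) - (if s(a, b) = s(u, v) then 1 else 0) := rfl

@[simp] lemma expand_mult_inl_inr (G : Multigraph V) (r : ℕ) (u v a : V) (i : Fin 2) :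
    (G.expand r u v).mult s(Sum.inl a, Sum.inr i)
      = if (i = 0 ∧ a = u) ∨ (i = 1 ∧ a = v) then 1 else 0 := rfl

@[simp] lemma expand_mult_inr_inl (G : Multigraph V) (r : ℕ) (u v a : V) (i : Fin 2) :
    (G.expand r u v).mult s(Sum.inr i, Sum.inl a)
      = if (i = 0 ∧ a = u) ∨ (i = 1 ∧ a = v) then 1 else 0 := rfl

@[simp] lemma expand_mult_inr_inr (G : Multigraph V) (r : ℕ) (u v : V) (i j : Fin 2) :
    (G.expand r u v).mult s(Sum.inr i, Sum.inr j)
      = if i = j then 0 else r - 1 := rfl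

@[simp] lemma treeExpand_inl_inl (T : Sym2 V → ℕ) (u v a b : V) :
    treeExpand T u v s(Sum.inl a, Sum.inl b) = T s(a, b) := rfl

@[simp] lemma treeExpand_inl_inr (T : Sym2 V → ℕ) (u v a : V) (i : Fin 2) :
    treeExpand T u v s(Sum.inl a, Sum.inr i)
      = if (i = 0 ∧ a = u) ∨ (i = 1 ∧ a = v) then 1 else 0 := rfl

@[simp] lemma treeExpand_inr_inl (T : Sym2 V → ℕ) (u v a : V) (i : Fin 2) :
    treeExpand T u v s(Sum.inr i, Sum.inl a)
      = if (i = 0 ∧ a = u) ∨ (i = 1 ∧ a = v) then 1 else 0 := rfl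

@[simp] lemma treeExpand_inr_inr (T : Sym2 V → ℕ) (u v : V) (i j : Fin 2) :
    treeExpand T u v s(Sum.inr i, Sum.inr j) = 0 := rfl

-- the indicator sum over b of [s(a,b) = s(u,v)]
lemma sum_pair_ind (u v a : V) (huv : u ≠ v) (A : Finset V) :
    ∑ b ∈ A, (if s(a, b) = s(u, v) then 1 else 0)
      = (if a = u ∧ v ∈ A then 1 else 0) + (if a = v ∧ u ∈ A then 1 else 0) := by
  have : ∀ b, (if s(a, b) = s(u, v) then (1:ℕ) else 0)
      = (if a = u then if b = v then 1 else 0 else 0) + (if a = v then if b = u then 1 else 0 else 0) := by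
    intro b
    by_cases h1 : a = u <;> by_cases h2 : a = v <;> by_cases h3 : b = u <;> by_cases h4 : b = v <;>
      simp_all [Sym2.eq_iff] <;> omega
  rw [Finset.sum_congr rfl (fun b _ => this b), Finset.sum_add_distrib]
  congr 1
  · by_cases h1 : a = u <;> simp [h1, Finset.sum_ite_eq' A v (fun _ => 1)]
  · by_cases h2 : a = v <;> simp [h2, Finset.sum_ite_eq' A u (fun _ => 1)]

end Helpers

section Main
set_option linter.unusedSectionVars false
variable {V : Type} [Fintype V] [DecidableEq V]

lemma expand_regular (r : ℕ) (hr : 3 ≤ r) (G : Multigraph V) (hreg : G.IsRegular r)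
    (u v : V) (huv : u ≠ v) (hm : 1 ≤ G.mult s(u, v)) :
    (G.expand r u v).IsRegular r := by
  intro w
  unfold Multigraph.degree
  rcases w with a | i
  · rw [Fintype.sum_sum_type]
    have h1 : ∑ b : V, (G.expand r u v).mult s(Sum.inl a, Sum.inl b)
        = r - ((if a = u then 1 else 0) + (if a = v then 1 else 0)) := by
      simp only [expand_mult_inl_inl]
      rw [Finset.sum_tsub_distrib]
      · have hd := hreg a
        unfold Multigraph.degree at hd
        rw [hd, sum_pair_ind u v a huv]
        simp
      · intro b _
        split_ifs with h
        · rcases Sym2.eq_iff.mp h with ⟨rfl, rfl⟩ | ⟨rfl, rfl⟩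
          · exact hm
          · rwa [Sym2.eq_swap]
        · exact Nat.zero_le _
    have h2 : ∑ i : Fin 2, (G.expand r u v).mult s(Sum.inl a, Sum.inr i)
        = (if a = u then 1 else 0) + (if a = v then 1 else 0) := by
      simp only [expand_mult_inl_inr, Fin.sum_univ_two]
      norm_num
    rw [h1, h2]
    have : (if a = u then 1 else 0) + (if a = v then 1 else 0) ≤ r := by
      split_ifs <;> omega
    omega
  · rw [Fintype.sum_sum_type]
    have h1 : ∑ a : V, (G.expand r u v).mult s(Sum.inr i, Sum.inl a)
        = 1 := by
      simp only [expand_mult_inr_inl]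
      fin_cases i
      · simp only [show ∀ a : V, ((0 : Fin 2) = 0 ∧ a = u) ∨ ((0 : Fin 2) = 1 ∧ a = v) ↔ a = u
          from fun a => by simp, Finset.sum_ite_eq' univ u (fun _ => 1)]
        simp
      · simp only [show ∀ a : V, ((1 : Fin 2) = 0 ∧ a = u) ∨ ((1 : Fin 2) = 1 ∧ a = v) ↔ a = v
          from fun a => by simp, Finset.sum_ite_eq' univ v (fun _ => 1)]
        simp
    have h2 : ∑ j : Fin 2, (G.expand r u v).mult s(Sum.inr i, Sum.inr j) = r - 1 := by
      simp only [expand_mult_inr_inr, Fin.sum_univ_two]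
      fin_cases i <;> simp
    rw [h1, h2]
    omega

end Main

section Cut
set_option linter.unusedSectionVars false
variable {V : Type} [Fintype V] [DecidableEq V]

lemma sum_ind_and (A : Finset V) (c : Prop) [Decidable c] (w : V) :
    ∑ a ∈ A, (if a = w ∧ c then 1 else 0) = if w ∈ A ∧ c then 1 else 0 := by
  by_cases hc : c <;> simp [hc, sum_ind]

lemma term1 (G : Multigraph V) (u v : V) (huv : u ≠ v) (hm : 1 ≤ G.mult s(u, v))
    (A : Finset V) :
    ∑ a ∈ A, ∑ b ∈ Aᶜ, (G.mult s(a, b) - (if s(a, b) = s(u, v) then 1 else 0))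
      = G.cutsize A - ((if u ∈ A ∧ v ∈ Aᶜ then 1 else 0) + (if v ∈ A ∧ u ∈ Aᶜ then 1 else 0)) := by
  have hle : ∀ a b : V, (if s(a, b) = s(u, v) then 1 else 0) ≤ G.mult s(a, b) := by
    intro a b
    split_ifs with h
    · rcases Sym2.eq_iff.mp h with ⟨rfl, rfl⟩ | ⟨rfl, rfl⟩
      · exact hm
      · rwa [Sym2.eq_swap]
    · exact Nat.zero_le _
  have inner : ∀ a ∈ A, ∑ b ∈ Aᶜ, (G.mult s(a, b) - (if s(a, b) = s(u, v) then 1 else 0))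
      = ∑ b ∈ Aᶜ, G.mult s(a, b)
        - ((if a = u ∧ v ∈ Aᶜ then 1 else 0) + (if a = v ∧ u ∈ Aᶜ then 1 else 0)) := by
    intro a _
    rw [Finset.sum_tsub_distrib Aᶜ (fun b _ => hle a b), sum_pair_ind u v a huv]
  have hout : ∀ a ∈ A, ((if a = u ∧ v ∈ Aᶜ then 1 else 0) + (if a = v ∧ u ∈ Aᶜ then 1 else 0))
      ≤ ∑ b ∈ Aᶜ, G.mult s(a, b) := by
    intro a _
    rw [← sum_pair_ind u v a huv]
    exact Finset.sum_le_sum (fun b _ => hle a b)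
  rw [Finset.sum_congr rfl inner, Finset.sum_tsub_distrib A hout]
  unfold Multigraph.cutsize
  congr 1
  rw [Finset.sum_add_distrib, sum_ind_and, sum_ind_and]

lemma expand_cutsize (r : ℕ) (G : Multigraph V) (u v : V) (huv : u ≠ v)
    (hm : 1 ≤ G.mult s(u, v)) (S : Finset (V ⊕ Fin 2)) :
    (G.expand r u v).cutsize S =
      G.cutsize S.toLeft
        - ((if u ∈ S.toLeft ∧ v ∉ S.toLeft then 1 else 0)
            + (if v ∈ S.toLeft ∧ u ∉ S.toLeft then 1 else 0))
      + ((if u ∈ S.toLeft ∧ (0 : Fin 2) ∉ S.toRight then 1 else 0)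
            + (if v ∈ S.toLeft ∧ (1 : Fin 2) ∉ S.toRight then 1 else 0))
      + ((if (0 : Fin 2) ∈ S.toRight ∧ u ∉ S.toLeft then 1 else 0)
            + (if (1 : Fin 2) ∈ S.toRight ∧ v ∉ S.toLeft then 1 else 0))
      + ((if (0 : Fin 2) ∈ S.toRight ∧ (1 : Fin 2) ∉ S.toRight then 1 else 0)
            + (if (1 : Fin 2) ∈ S.toRight ∧ (0 : Fin 2) ∉ S.toRight then 1 else 0)) * (r - 1) := by
  set A := S.toLeft with hA
  set B := S.toRight with hB
  unfold Multigraph.cutsize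
  rw [sum_sumtype S]
  have hsplit : ∀ x : V ⊕ Fin 2, ∑ y ∈ Sᶜ, (G.expand r u v).mult s(x, y)
      = ∑ b ∈ Aᶜ, (G.expand r u v).mult s(x, Sum.inl b)
        + ∑ j ∈ Bᶜ, (G.expand r u v).mult s(x, Sum.inr j) := by
    intro x
    rw [sum_sumtype Sᶜ, compl_toLeft, compl_toRight]
  simp only [hsplit]
  rw [Finset.sum_add_distrib, Finset.sum_add_distrib]
  have t1 : ∑ a ∈ A, ∑ b ∈ Aᶜ, (G.expand r u v).mult s(Sum.inl a, Sum.inl b)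
      = G.cutsize A - ((if u ∈ A ∧ v ∉ A then 1 else 0) + (if v ∈ A ∧ u ∉ A then 1 else 0)) := by
    simp only [expand_mult_inl_inl]
    rw [term1 G u v huv hm A]
    simp [Finset.mem_compl]
  have t2 : ∑ a ∈ A, ∑ j ∈ Bᶜ, (G.expand r u v).mult s(Sum.inl a, Sum.inr j)
      = (if u ∈ A ∧ (0 : Fin 2) ∉ B then 1 else 0)
        + (if v ∈ A ∧ (1 : Fin 2) ∉ B then 1 else 0) := by
    simp only [expand_mult_inl_inr]
    have : ∀ a : V, ∑ j ∈ Bᶜ, (if (j = 0 ∧ a = u) ∨ (j = 1 ∧ a = v) then 1 else 0)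
        = (if a = u ∧ (0 : Fin 2) ∉ B then 1 else 0)
          + (if a = v ∧ (1 : Fin 2) ∉ B then 1 else 0) := by
      intro a
      rw [sum_fin2]
      by_cases h0 : (0 : Fin 2) ∈ B <;> by_cases h1 : (1 : Fin 2) ∈ B <;>
        simp [h0, h1]
    rw [Finset.sum_congr rfl (fun a _ => this a), Finset.sum_add_distrib,
      sum_ind_and, sum_ind_and]
  have t3 : ∑ i ∈ B, ∑ b ∈ Aᶜ, (G.expand r u v).mult s(Sum.inr i, Sum.inl b)
      = (if (0 : Fin 2) ∈ B ∧ u ∉ A then 1 else 0)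
        + (if (1 : Fin 2) ∈ B ∧ v ∉ A then 1 else 0) := by
    simp only [expand_mult_inr_inl]
    rw [sum_fin2]
    by_cases h0 : (0 : Fin 2) ∈ B <;> by_cases h1 : (1 : Fin 2) ∈ B <;>
      by_cases hu : u ∈ A <;> by_cases hv : v ∈ A <;>
      simp [h0, h1, hu, hv, sum_ind_and, sum_ind, Finset.mem_compl]
  have t4 : ∑ i ∈ B, ∑ j ∈ Bᶜ, (G.expand r u v).mult s(Sum.inr i, Sum.inr j)
      = ((if (0 : Fin 2) ∈ B ∧ (1 : Fin 2) ∉ B then 1 else 0)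
          + (if (1 : Fin 2) ∈ B ∧ (0 : Fin 2) ∉ B then 1 else 0)) * (r - 1) := by
    simp only [expand_mult_inr_inr]
    rw [sum_fin2]
    by_cases h0 : (0 : Fin 2) ∈ B <;> by_cases h1 : (1 : Fin 2) ∈ B <;>
      simp [h0, h1, sum_fin2]
  rw [t1, t2, t3, t4]
  unfold Multigraph.cutsize
  ac_rfl

end Cut

section CutBound
set_option linter.unusedSectionVars false
variable {V : Type} [Fintype V] [DecidableEq V]

lemma expand_cut_ge (r : ℕ) (hr : 3 ≤ r) (G : Multigraph V) (hG : G.IsRGraph r)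
    (T : Sym2 V → ℕ) (hT : G.IsSpanningTree T)
    (u v : V) (huv : u ≠ v) (hm : 1 ≤ G.mult s(u, v))
    (S : Finset (V ⊕ Fin 2)) (hodd : Odd S.card) :
    r ≤ (G.expand r u v).cutsize S := by
  rw [expand_cutsize r G u v huv hm S]
  set A := S.toLeft with hA
  set B := S.toRight with hB
  have hcard : A.card + B.card = S.card := Finset.card_toLeft_add_card_toRight (u := S)
  have hBcard : B.card = (if (0 : Fin 2) ∈ B then 1 else 0) + (if (1 : Fin 2) ∈ B then 1 else 0) :=
    card_fin2 B
  rw [Nat.odd_iff] at hodd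
  -- helper for the mixed case
  have hmixed : ∀ (w₁ w₂ : V), w₁ ∈ A → w₂ ∉ A → A.card % 2 = 0 → 2 ≤ G.cutsize A := by
    intro w₁ w₂ hw₁ hw₂ hev
    have h1 : 1 ≤ G.cutsize A := cutsize_pos G T hT A ⟨w₁, hw₁⟩
      (fun h => hw₂ (h ▸ Finset.mem_univ w₂))
    obtain ⟨k, hk⟩ := cutsize_parity G r hG.1 A
    have heven : Even (G.cutsize A) := by
      have h2 : Even (r * A.card) := (Nat.even_iff.mpr hev).mul_left r
      rw [hk] at h2
      rcases Nat.even_add.mp h2 with h3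
      exact h3.mp (even_two_mul k)
    obtain ⟨t, ht⟩ := heven
    omega
  by_cases h0 : (0 : Fin 2) ∈ B <;> by_cases h1 : (1 : Fin 2) ∈ B
  · -- both new vertices in S : A.card odd
    rw [if_pos h0, if_pos h1] at hBcard
    have hAodd : Odd A.card := by rw [Nat.odd_iff]; omega
    have hc : r ≤ G.cutsize A := hG.2 A hAodd
    by_cases hu : u ∈ A <;> by_cases hv : v ∈ A <;> simp [h0, h1, hu, hv] <;> omega
  · -- 0 ∈ B, 1 ∉ B : A.card even
    rw [if_pos h0, if_neg h1] at hBcard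
    have hev : A.card % 2 = 0 := by omega
    by_cases hu : u ∈ A <;> by_cases hv : v ∈ A
    · simp [h0, h1, hu, hv]; omega
    · have h2 := hmixed u v hu hv hev
      simp [h0, h1, hu, hv]; omega
    · have h2 := hmixed v u hv hu hev
      simp [h0, h1, hu, hv]; omega
    · simp [h0, h1, hu, hv]; omega
  · -- 1 ∈ B, 0 ∉ B
    rw [if_neg h0, if_pos h1] at hBcard
    have hev : A.card % 2 = 0 := by omega
    by_cases hu : u ∈ A <;> by_cases hv : v ∈ A
    · simp [h0, h1, hu, hv]; omega
    · have h2 := hmixed u v hu hv hev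
      simp [h0, h1, hu, hv]; omega
    · have h2 := hmixed v u hv hu hev
      simp [h0, h1, hu, hv]; omega
    · simp [h0, h1, hu, hv]; omega
  · -- neither
    rw [if_neg h0, if_neg h1] at hBcard
    have hAodd : Odd A.card := by rw [Nat.odd_iff]; omega
    have hc : r ≤ G.cutsize A := hG.2 A hAodd
    by_cases hu : u ∈ A <;> by_cases hv : v ∈ A <;> simp [h0, h1, hu, hv] <;> omega

end CutBound

section Tree
set_option linter.unusedSectionVars false
variable {V : Type} [Fintype V] [DecidableEq V]

lemma treeExpand_le (r : ℕ) (G : Multigraph V) (T : Sym2 V → ℕ)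
    (hle : ∀ p, T p ≤ G.mult p) (u v : V) (he : T s(u, v) < G.mult s(u, v)) :
    ∀ p, treeExpand T u v p ≤ (G.expand r u v).mult p := by
  intro p
  induction p using Sym2.ind with
  | _ x y =>
    rcases x with a | i <;> rcases y with b | j
    · rw [treeExpand_inl_inl, expand_mult_inl_inl]
      split_ifs with h
      · rw [h]; omega
      · have := hle s(a, b); omega
    · exact le_of_eq rfl
    · exact le_of_eq rfl
    · rw [treeExpand_inr_inr]; exact Nat.zero_le _

lemma treeExpand_sum (G : Multigraph V) (T : Sym2 V → ℕ)
    (hle : ∀ p, T p ≤ G.mult p) (u v : V) :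
    ∑ p : Sym2 (V ⊕ Fin 2), treeExpand T u v p = (∑ p : Sym2 V, T p) + 2 := by
  have hTloop : ∀ a : V, T s(a, a) = 0 := by
    intro a
    have := hle s(a, a)
    rw [G.loopless a] at this
    omega
  have hT'loop : ∀ w : V ⊕ Fin 2, treeExpand T u v s(w, w) = 0 := by
    intro w
    rcases w with a | i
    · rw [treeExpand_inl_inl]; exact hTloop a
    · rw [treeExpand_inr_inr]
  have key1 := double_sum_eq_two_mul (treeExpand T u v) hT'loop Finset.univ
  have key2 := double_sum_eq_two_mul T hTloop Finset.univ
  rw [Finset.sym2_univ] at key1 key2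
  have hdeg : ∑ x : V ⊕ Fin 2, ∑ y : V ⊕ Fin 2, treeExpand T u v s(x, y)
      = (∑ x : V, ∑ y : V, T s(x, y)) + 4 := by
    rw [Fintype.sum_sum_type]
    have hinl : ∀ a : V, ∑ y : V ⊕ Fin 2, treeExpand T u v s(Sum.inl a, y)
        = (∑ b : V, T s(a, b)) + ((if a = u then 1 else 0) + (if a = v then 1 else 0)) := by
      intro a
      rw [Fintype.sum_sum_type]
      congr 1
      rw [Fin.sum_univ_two]
      simp
    have hinr : ∀ i : Fin 2, ∑ y : V ⊕ Fin 2, treeExpand T u v s(Sum.inr i, y) = 1 := by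
      intro i
      rw [Fintype.sum_sum_type]
      have h2 : ∑ j : Fin 2, treeExpand T u v s(Sum.inr i, Sum.inr j) = 0 := by
        simp
      rw [h2, add_zero]
      fin_cases i
      · simp only [treeExpand_inr_inl,
          show ∀ a : V, ((0 : Fin 2) = 0 ∧ a = u) ∨ ((0 : Fin 2) = 1 ∧ a = v) ↔ a = u
            from fun a => by simp, Finset.sum_ite_eq' Finset.univ u (fun _ => 1)]
        simp
      · simp only [treeExpand_inr_inl,
          show ∀ a : V, ((1 : Fin 2) = 0 ∧ a = u) ∨ ((1 : Fin 2) = 1 ∧ a = v) ↔ a = v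
            from fun a => by simp, Finset.sum_ite_eq' Finset.univ v (fun _ => 1)]
        simp
    rw [Finset.sum_congr rfl (fun a _ => hinl a), Finset.sum_congr rfl (fun i _ => hinr i),
      Finset.sum_add_distrib, Finset.sum_add_distrib, sum_ind, sum_ind, Fin.sum_univ_two]
    simp
  rw [hdeg, key2] at key1
  omega

lemma treeExpand_conn (T : Sym2 V → ℕ)
    (hconn : ∀ a b : V, Relation.ReflTransGen (fun a b => T s(a, b) ≠ 0) a b) (u v : V) :
    ∀ w₁ w₂ : V ⊕ Fin 2,
      Relation.ReflTransGen (fun a b => treeExpand T u v s(a, b) ≠ 0) w₁ w₂ := by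
  set rel' := fun a b : V ⊕ Fin 2 => treeExpand T u v s(a, b) ≠ 0 with hrel
  have hlift : ∀ {x y : V}, Relation.ReflTransGen (fun a b => T s(a, b) ≠ 0) x y →
      Relation.ReflTransGen rel' (Sum.inl x) (Sum.inl y) := by
    intro x y h
    induction h with
    | refl => exact Relation.ReflTransGen.refl
    | tail _ hbc ih => exact ih.tail hbc
  have hto : ∀ (w : V ⊕ Fin 2) (z : V), Relation.ReflTransGen rel' w (Sum.inl z) := by
    intro w z
    rcases w with a | i
    · exact hlift (hconn a z)
    · fin_cases i
      · refine Relation.ReflTransGen.head ?_ (hlift (hconn u z))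
        simp [hrel]
      · refine Relation.ReflTransGen.head ?_ (hlift (hconn v z))
        simp [hrel]
  intro w₁ w₂
  rcases w₂ with b | j
  · exact hto w₁ b
  · fin_cases j
    · refine (hto w₁ u).tail ?_
      simp [hrel]
    · refine (hto w₁ v).tail ?_
      simp [hrel]

end Tree

/-- **Edge-expansion.**  Let `G` be an `r`-graph (`r ≥ 3`) with spanning tree `T`
and let `uv` be an edge of `G` not in `T`.  Then the edge-expansion `G'` of `G` at
`uv` is again an `r`-graph, and `T` together with the edges `uu'`, `vv'` is a
spanning tree of `G'`. -/
theorem edge_expansion_is_r_graph {V : Type} [Fintype V] [DecidableEq V]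
    (r : ℕ) (hr : 3 ≤ r) (G : Multigraph V) (hG : G.IsRGraph r)
    (T : Sym2 V → ℕ) (hT : G.IsSpanningTree T)
    (u v : V) (he : T s(u, v) < G.mult s(u, v)) :
    (G.expand r u v).IsRGraph r ∧
      (G.expand r u v).IsSpanningTree (treeExpand T u v) := by
  have huv : u ≠ v := by
    intro h
    subst h
    rw [G.loopless u] at he
    omega
  have hm : 1 ≤ G.mult s(u, v) := by omega
  refine ⟨⟨expand_regular r hr G hG.1 u v huv hm,
    fun S hS => expand_cut_ge r hr G hG T hT u v huv hm S hS⟩,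
    treeExpand_le r G T hT.1 u v he, ?_, treeExpand_conn T hT.2.2 u v⟩
  rw [treeExpand_sum G T hT.1 u v, Fintype.card_sum, Fintype.card_fin, ← hT.2.1]
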